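/- arXiv:1412.4027 — 6 statements merged into one kernel-verified Lean document; each statement's English description precedes it below -/
import Mathlib

section
/- Let 1 → A →ι B →π C → 1 be a short exact sequence of G-groups and let c ∈ C^G. For any b ∈ B with π(b) = c and any s ∈ G, the element b⁻¹ * (s • b) lies in the image of ι, and the function δ_b : G → A defined by ι(δ_b(s)) = b⁻¹ * (s • b) is a 1-cocycle of G in A. Moreover, if b' ∈ B is another element with π(b') = c, then δ_b and δ_{b'} are cohomologous; hence there is a well-defined connecting map δ : C^G → H¹(G,A) sending c to the class of δ_b. -/
/-- A 1-cocycle of a group `G` in a (not necessarily abelian) `G`-group `A`. -/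
def IsCocycle {G A : Type*} [Group G] [Group A] [MulDistribMulAction G A]
    (a : G → A) : Prop :=
  ∀ s t : G, a (s * t) = a s * s • a t

/-- Two functions `a b : G → A` are cohomologous. -/
def Cohomologous {G A : Type*} [Group G] [Group A] [MulDistribMulAction G A]
    (a b : G → A) : Prop :=
  ∃ c : A, ∀ s : G, b s = c⁻¹ * a s * s • c

/-- The connecting map of a short exact sequence `1 → A → B → C → 1` of
`G`-groups: for a `G`-fixed `c : C` and a lift `b` of `c`, the element
`b⁻¹ * (s • b)` lies in the image of `ι`; the resulting function
`δ_b : G → A` (characterised by `ι (δ_b s) = b⁻¹ * (s • b)`) is a 1-cocycle,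
and for two lifts `b`, `b'` of `c` the cocycles `δ_b` and `δ_{b'}` are
cohomologous; hence `δ : C^G → H¹(G,A)` is well defined. -/
theorem connecting_cocycle (G A B C : Type*) [Group G] [Group A] [Group B] [Group C]
    [MulDistribMulAction G A] [MulDistribMulAction G B] [MulDistribMulAction G C]
    (ι : A →* B) (π : B →* C)
    (hι_equiv : ∀ (s : G) (a : A), ι (s • a) = s • ι a)
    (hπ_equiv : ∀ (s : G) (b : B), π (s • b) = s • π b)
    (hι : Function.Injective ι) (hπ : Function.Surjective π)
    (hexact : ι.range = π.ker)
    (c : C) (hc : ∀ s : G, s • c = c)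
    (b b' : B) (hb : π b = c) (hb' : π b' = c)
    (δ δ' : G → A)
    (hδ : ∀ s : G, ι (δ s) = b⁻¹ * (s • b))
    (hδ' : ∀ s : G, ι (δ' s) = b'⁻¹ * (s • b')) :
    (∀ s : G, b⁻¹ * (s • b) ∈ ι.range) ∧ IsCocycle δ ∧ Cohomologous δ δ' := by
  refine ⟨fun s => ?_, fun s t => ?_, ?_⟩
  · rw [hexact, MonoidHom.mem_ker, map_mul, map_inv, hb, hπ_equiv, hb, hc,
      inv_mul_cancel]
  · apply hι
    rw [map_mul, hι_equiv, hδ, hδ, hδ, mul_smul, smul_mul', smul_inv']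
    group
  · have hmem : b⁻¹ * b' ∈ ι.range := by
      rw [hexact, MonoidHom.mem_ker, map_mul, map_inv, hb, hb', inv_mul_cancel]
    obtain ⟨a, ha⟩ := hmem
    refine ⟨a, fun s => ?_⟩
    apply hι
    rw [map_mul, map_mul, map_inv, hι_equiv, ha, hδ, hδ', smul_mul', smul_inv']
    group
end

section
/- Let 1 → A →ι B →π C → 1 be a short exact sequence of G-groups. The sequence of pointed sets is exact at C^G = H⁰(G,C): an element c ∈ C^G lies in the image of π restricted to B^G if and only if the connecting class δ(c) ∈ H¹(G,A) is the trivial class (i.e. any cocycle s ↦ ι⁻¹(b⁻¹ * (s • b)), with π(b) = c, is a coboundary). -/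
/-- Exactness at `C^G = H⁰(G,C)` for a short exact sequence
`1 → A → B → C → 1` of `G`-groups: a `G`-fixed `c : C` is the image of a
`G`-fixed element of `B` iff the connecting class `δ(c) ∈ H¹(G,A)` is
trivial, i.e. every cocycle `s ↦ ι⁻¹ (b⁻¹ * (s • b))` with `π b = c` is a
coboundary. -/
theorem exact_at_H0C (G A B C : Type*) [Group G] [Group A] [Group B] [Group C]
    [MulDistribMulAction G A] [MulDistribMulAction G B] [MulDistribMulAction G C]
    (ι : A →* B) (π : B →* C)
    (hι_equiv : ∀ (s : G) (a : A), ι (s • a) = s • ι a)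
    (hπ_equiv : ∀ (s : G) (b : B), π (s • b) = s • π b)
    (hι : Function.Injective ι) (hπ : Function.Surjective π)
    (hexact : ι.range = π.ker)
    (c : C) (hc : ∀ s : G, s • c = c) :
    (∃ b : B, (∀ s : G, s • b = b) ∧ π b = c) ↔
      (∀ (b : B) (δ : G → A), π b = c → (∀ s : G, ι (δ s) = b⁻¹ * (s • b)) →
        Cohomologous (fun _ => 1) δ) := by
  constructor
  · rintro ⟨b₀, hb₀fix, hb₀⟩ b δ hb hδ
    have h1 : π (b₀⁻¹ * b) = 1 := by simp [hb₀, hb]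
    obtain ⟨a, ha⟩ : b₀⁻¹ * b ∈ ι.range := by rw [hexact]; exact h1
    refine ⟨a, fun s => hι ?_⟩
    simp only [map_mul, map_inv, map_one, mul_one, hι_equiv, ha, hδ, smul_mul',
      smul_inv', hb₀fix]
    group
  · intro h
    obtain ⟨b, hb⟩ := hπ c
    have hker : ∀ s : G, b⁻¹ * s • b ∈ π.ker := fun s => by
      simp [MonoidHom.mem_ker, hπ_equiv, hb, hc s]
    have hrange : ∀ s : G, b⁻¹ * s • b ∈ ι.range := fun s => by
      rw [hexact]; exact hker s
    choose δ hδ using hrange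
    obtain ⟨a, ha⟩ := h b δ hb hδ
    refine ⟨b * (ι a)⁻¹, fun s => ?_, by
      have : π (ι a) = 1 := by
        have : ι a ∈ π.ker := hexact ▸ ⟨a, rfl⟩
        exact this
      simp [hb, this]⟩
    have hδa : ∀ s : G, ι (δ s) = ι a⁻¹ * ι (s • a) := fun s => by
      rw [ha s]; simp [map_mul]
    have hsb : s • b = b * ι (δ s) := by rw [hδ]; group
    rw [smul_mul', hsb, smul_inv', ← hι_equiv, hδa, map_inv]
    group
end

section
/- Let 1 → A →ι B →π C → 1 be a short exact sequence of G-groups. The induced sequence of pointed sets is exact at H¹(G,A): a 1-cocycle a : G → A has ι ∘ a a coboundary in B if and only if the class of a equals the connecting class δ(c) for some c ∈ C^G. -/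
/-- Exactness at `H¹(G,A)` for a short exact sequence `1 → A → B → C → 1` of
`G`-groups: for a 1-cocycle `a : G → A`, the cocycle `ι ∘ a` is a coboundary
in `B` iff the class of `a` is the connecting class `δ(c)` of some
`G`-fixed `c : C`, i.e. `a` is cohomologous to a cocycle `δ` with
`ι (δ s) = b⁻¹ * (s • b)` for a lift `b` of `c`. -/
theorem exact_at_H1A (G A B C : Type*) [Group G] [Group A] [Group B] [Group C]
    [MulDistribMulAction G A] [MulDistribMulAction G B] [MulDistribMulAction G C]
    (ι : A →* B) (π : B →* C)
    (hι_equiv : ∀ (s : G) (a : A), ι (s • a) = s • ι a)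
    (hπ_equiv : ∀ (s : G) (b : B), π (s • b) = s • π b)
    (hι : Function.Injective ι) (hπ : Function.Surjective π)
    (hexact : ι.range = π.ker)
    (a : G → A) (ha : IsCocycle a) :
    Cohomologous (fun _ => (1 : B)) (fun s => ι (a s)) ↔
      ∃ c : C, (∀ s : G, s • c = c) ∧
        ∃ (b : B) (δ : G → A), π b = c ∧
          (∀ s : G, ι (δ s) = b⁻¹ * (s • b)) ∧ Cohomologous a δ := by
  constructor
  · rintro ⟨β, hβ⟩
    refine ⟨π β, ?_, β, a, rfl, ?_, 1, fun s => by simp⟩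
    · intro s
      rw [← hπ_equiv]
      have hsβ : s • β = β * ι (a s) := by
        have := hβ s
        simp only [one_mul] at this
        rw [this]; group
      have : π (ι (a s)) = 1 := by
        have : ι (a s) ∈ π.ker := hexact ▸ ⟨a s, rfl⟩
        exact this
      rw [hsβ, map_mul, this, mul_one]
    · intro s
      have := hβ s
      simpa using this
  · rintro ⟨c, hc, b, δ, hbc, hδ, e, he⟩
    refine ⟨b * (ι e)⁻¹, fun s => ?_⟩
    have h1 : a s = e * δ s * (s • e)⁻¹ := by
      rw [he s]; group
    show ι (a s) = (b * (ι e)⁻¹)⁻¹ * 1 * s • (b * (ι e)⁻¹)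
    rw [h1, map_mul, map_mul, map_inv, hδ s, hι_equiv, smul_mul', smul_inv']
    group
end

section
/- Let 1 → A →ι B →π C → 1 be a short exact sequence of G-groups. The induced sequence of pointed sets is exact at H¹(G,B): a 1-cocycle b : G → B has π ∘ b a coboundary in C if and only if b is cohomologous to ι ∘ a for some 1-cocycle a : G → A. -/
/-- Exactness at `H¹(G,B)` for a short exact sequence `1 → A → B → C → 1` of
`G`-groups: for a 1-cocycle `b : G → B`, the cocycle `π ∘ b` is a coboundary
in `C` iff `b` is cohomologous to `ι ∘ a` for some 1-cocycle `a : G → A`. -/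
theorem exact_at_H1B (G A B C : Type*) [Group G] [Group A] [Group B] [Group C]
    [MulDistribMulAction G A] [MulDistribMulAction G B] [MulDistribMulAction G C]
    (ι : A →* B) (π : B →* C)
    (hι_equiv : ∀ (s : G) (a : A), ι (s • a) = s • ι a)
    (hπ_equiv : ∀ (s : G) (b : B), π (s • b) = s • π b)
    (hι : Function.Injective ι) (hπ : Function.Surjective π)
    (hexact : ι.range = π.ker)
    (b : G → B) (hb : IsCocycle b) :
    Cohomologous (fun _ => (1 : C)) (fun s => π (b s)) ↔
      ∃ a : G → A, IsCocycle a ∧ Cohomologous b (fun s => ι (a s)) := by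
  constructor
  · rintro ⟨c, hc⟩
    obtain ⟨β, hβ⟩ := hπ c
    have hker : ∀ s : G, β * b s * (s • β)⁻¹ ∈ π.ker := by
      intro s
      simp only [MonoidHom.mem_ker, map_mul, map_inv, hπ_equiv, hβ]
      have h1 := hc s
      simp only [mul_one] at h1
      rw [h1]
      simp [mul_assoc]
    choose a ha using fun s => (hexact ▸ hker s : β * b s * (s • β)⁻¹ ∈ ι.range)
    refine ⟨a, ?_, β⁻¹, fun s => ?_⟩
    · intro s t
      apply hι
      rw [map_mul, hι_equiv, ha, ha, ha, hb s t, smul_mul', smul_mul', smul_inv',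
        mul_smul]
      simp [mul_assoc]
    · show ι (a s) = β⁻¹⁻¹ * b s * s • β⁻¹
      rw [ha, inv_inv, smul_inv']
  · rintro ⟨a, _, c, hc⟩
    refine ⟨(π c)⁻¹, fun s => ?_⟩
    have h1 : b s = c * ι (a s) * (s • c)⁻¹ := by
      have := hc s
      simp only at this
      rw [this]
      simp [mul_assoc]
    have hmem : ι (a s) ∈ π.ker := hexact ▸ ⟨a s, rfl⟩
    show π (b s) = (π c)⁻¹⁻¹ * 1 * s • (π c)⁻¹
    rw [h1]
    simp [map_mul, map_inv, hπ_equiv, MonoidHom.mem_ker.mp hmem, smul_inv']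
end

section
/- Let f and g be cusp forms of weight n for SL₂(ℤ). Then the function z ↦ f(z) * conj(g(z)) * (Im z)^(n-2) is integrable on the standard fundamental domain 𝒟; in particular the Petersson inner product ⟨f,g⟩ = ∫_𝒟 f(z) conj(g(z)) (Im z)^(n-2) dx dy is finite. -/
open UpperHalfPlane Filter Complex MeasureTheory
open scoped Manifold MatrixGroups Topology

/-- The weight-`n` modular transformation law for `SL(2, ℤ)`. -/
def IsWeaklyModular (n : ℤ) (f : ℍ → ℂ) : Prop :=
  ∀ (γ : SL(2, ℤ)) (z : ℍ),
    f (γ • z) = (((γ : Matrix (Fin 2) (Fin 2) ℤ) 1 0 : ℂ) * z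
      + ((γ : Matrix (Fin 2) (Fin 2) ℤ) 1 1 : ℂ)) ^ n * f z

/-- A cusp form of weight `n` for `SL(2, ℤ)`. -/
def IsCuspForm (n : ℤ) (f : ℍ → ℂ) : Prop :=
  MDifferentiable 𝓘(ℂ) 𝓘(ℂ) f ∧ IsWeaklyModular n f ∧
    UpperHalfPlane.IsZeroAtImInfty f

/-- The standard fundamental domain `{z : |Re z| < 1/2, |z| > 1}` for the
action of `SL(2, ℤ)` on the upper half-plane, viewed as a subset of `ℂ`
(with its Lebesgue measure `dx dy`). -/
def FundamentalDomain : Set ℂ :=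
  {z : ℂ | 0 < z.im ∧ |z.re| < 1 / 2 ∧ 1 < ‖z‖}

/-- The Petersson integrand `f(z) conj(g(z)) (Im z)^(n-2)` of weight `n`,
extended (by `0`) to all of `ℂ`. -/
noncomputable def peterssonIntegrand (n : ℤ) (f g : ℍ → ℂ) : ℂ → ℂ :=
  fun z =>
    if h : 0 < z.im then
      f ⟨z, h⟩ * (starRingEnd ℂ) (g ⟨z, h⟩) * ((z.im : ℂ)) ^ (n - 2)
    else 0

lemma cusp_exp_decay (n : ℤ) (f : ℍ → ℂ) (hf : IsCuspForm n f) :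
    ∃ C A : ℝ, 0 ≤ C ∧ ∀ τ : ℍ, A ≤ τ.im →
      ‖f τ‖ ≤ C * Real.exp (-2 * Real.pi * τ.im) := by
  have hper : Function.Periodic (f ∘ ofComplex) 1 := by
    intro w
    by_cases hw : 0 < w.im
    · have hw1 : 0 < (w + 1).im := by simp [hw]
      have h1 : ofComplex (w + 1) = (⟨w + 1, hw1⟩ : ℍ) := ofComplex_apply_of_im_pos hw1
      have h2 : ofComplex w = (⟨w, hw⟩ : ℍ) := ofComplex_apply_of_im_pos hw
      simp only [Function.comp_apply, h1, h2]
      have hT := hf.2.1 ModularGroup.T (ofComplex w)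
      have hTs : ModularGroup.T • ofComplex w = ofComplex (w + 1) := by
        rw [modular_T_smul, h1, h2]
        ext
        simp [add_comm]
      rw [hTs, h1, h2] at hT
      rw [hT, ModularGroup.coe_T]
      norm_num
    · have hw1 : (w + 1).im ≤ 0 := by
        simp only [add_im, one_im, add_zero]
        exact le_of_not_gt hw
      simp only [Function.comp_apply, ofComplex_apply_of_im_nonpos hw1,
        ofComplex_apply_of_im_nonpos (le_of_not_gt hw)]
  have hdiff : ∀ᶠ z in (Filter.comap Complex.im Filter.atTop),
      DifferentiableAt ℂ (f ∘ ofComplex) z :=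
    Filter.eventually_of_mem (Filter.preimage_mem_comap (Filter.Ioi_mem_atTop 0))
      (fun z hz => mdifferentiableAt_iff_differentiableAt.mp
        ((hf.1 (ofComplex z)).comp z (mdifferentiableAt_ofComplex hz)))
  have hzero : Filter.ZeroAtFilter (Filter.comap Complex.im Filter.atTop) (f ∘ ofComplex) :=
    hf.2.2.comp tendsto_comap_im_ofComplex
  have hO := (hper.exp_decay_of_zero_at_inf one_pos hdiff hzero).comp_tendsto
    tendsto_coe_atImInfty
  rw [Asymptotics.isBigO_iff] at hO
  obtain ⟨c, hc⟩ := hO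
  rw [Filter.eventually_iff, atImInfty_mem] at hc
  obtain ⟨A, hA⟩ := hc
  refine ⟨max c 0, A, le_max_right _ _, fun τ hτ => ?_⟩
  have := hA τ hτ
  simp only [Set.mem_setOf_eq, Function.comp_apply, ofComplex_apply, Real.norm_eq_abs,
    Real.abs_exp, div_one, coe_im] at this
  calc ‖f τ‖ ≤ c * Real.exp (-2 * Real.pi * τ.im) := this
    _ ≤ max c 0 * Real.exp (-2 * Real.pi * τ.im) := by
        gcongr
        exact le_max_left _ _

lemma peterssonIntegrand_eq (n : ℤ) (f g : ℍ → ℂ) {z : ℂ} (hz : 0 < z.im) :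
    peterssonIntegrand n f g z
      = f (ofComplex z) * (starRingEnd ℂ) (g (ofComplex z)) * ((z.im : ℂ)) ^ (n - 2) := by
  rw [peterssonIntegrand, dif_pos hz, ofComplex_apply_of_im_pos hz]

lemma peterssonIntegrand_continuousOn (n : ℤ) (f g : ℍ → ℂ)
    (hf : IsCuspForm n f) (hg : IsCuspForm n g) :
    ContinuousOn (peterssonIntegrand n f g) {z : ℂ | 0 < z.im} := by
  have h1 : ContinuousOn
      (fun z : ℂ => f (ofComplex z) * (starRingEnd ℂ) (g (ofComplex z))
        * ((z.im : ℂ)) ^ (n - 2)) {z : ℂ | 0 < z.im} := by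
    intro z hz
    have hz' : 0 < z.im := hz
    have hoc : ContinuousAt ofComplex z := (mdifferentiableAt_ofComplex hz').continuousAt
    have hfc : ContinuousAt (fun z : ℂ => f (ofComplex z)) z :=
      ((hf.1 (ofComplex z)).continuousAt).comp hoc
    have hgc : ContinuousAt (fun z : ℂ => (starRingEnd ℂ) (g (ofComplex z))) z :=
      continuous_star.continuousAt.comp (((hg.1 (ofComplex z)).continuousAt).comp hoc)
    have hzc : ContinuousAt (fun z : ℂ => ((z.im : ℂ)) ^ (n - 2)) z := by
      refine ContinuousAt.zpow₀ ?_ _ (Or.inl ?_)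
      · exact (Complex.continuous_ofReal.comp Complex.continuous_im).continuousAt
      · exact_mod_cast hz'.ne'
    exact ((hfc.mul hgc).mul hzc).continuousWithinAt
  exact h1.congr (fun z hz => peterssonIntegrand_eq n f g hz)

/-- For cusp forms `f`, `g` of weight `n`, the Petersson integrand
`f(z) conj(g(z)) (Im z)^(n-2)` is integrable on the standard fundamental
domain; in particular the Petersson inner product `⟨f, g⟩` is finite. -/
theorem petersson_integrable (n : ℤ) (f g : ℍ → ℂ)
    (hf : IsCuspForm n f) (hg : IsCuspForm n g) :
    IntegrableOn (peterssonIntegrand n f g) FundamentalDomain volume := by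
  obtain ⟨Cf, Af, hCf0, hCf⟩ := cusp_exp_decay n f hf
  obtain ⟨Cg, Ag, hCg0, hCg⟩ := cusp_exp_decay n g hg
  set D := FundamentalDomain with hD
  have hD_open : IsOpen D := by
    have h1 : IsOpen {z : ℂ | 0 < z.im} := isOpen_lt continuous_const Complex.continuous_im
    have h2 : IsOpen {z : ℂ | |z.re| < 1 / 2} :=
      isOpen_lt (Complex.continuous_re.abs) continuous_const
    have h3 : IsOpen {z : ℂ | 1 < ‖z‖} :=
      isOpen_lt continuous_const continuous_norm
    have : D = {z : ℂ | 0 < z.im} ∩ ({z : ℂ | |z.re| < 1 / 2} ∩ {z : ℂ | 1 < ‖z‖}) := by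
      ext z; simp [hD, FundamentalDomain, Set.mem_setOf_eq, and_assoc]
    rw [this]
    exact h1.inter (h2.inter h3)
  have hDsub : D ⊆ {z : ℂ | 0 < z.im} := fun z hz => hz.1
  have him : ∀ z ∈ D, 1 / 2 < z.im := by
    intro z hz
    obtain ⟨h0, hre, habs⟩ := hz
    have h1 : 1 < z.re ^ 2 + z.im ^ 2 := by
      have := Complex.sq_norm z
      rw [Complex.normSq_apply] at this
      nlinarith [habs]
    have hre2 : z.re ^ 2 < 1 / 4 := by
      nlinarith [abs_nonneg z.re, _root_.sq_abs z.re]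
    nlinarith
  set A : ℝ := max (max Af Ag) 1 with hA
  set K : Set ℂ := Set.Icc (-(1/2) : ℝ) (1/2) ×ℂ Set.Icc (1/2 : ℝ) A with hKdef
  have hK : IsCompact K := by
    apply Metric.isCompact_of_isClosed_isBounded
    · exact ((isClosed_Icc.preimage Complex.continuous_re).inter
        (isClosed_Icc.preimage Complex.continuous_im))
    · rw [Metric.isBounded_iff_subset_closedBall 0]
      refine ⟨1 + |A| + 1, fun z hz => ?_⟩
      rw [Complex.mem_reProdIm] at hz
      rw [Metric.mem_closedBall, dist_zero_right]
      have h1 : |z.re| ≤ 1/2 := abs_le.2 ⟨hz.1.1, hz.1.2⟩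
      have h2 : |z.im| ≤ |A| := by
        rcases hz.2 with ⟨ha, hb⟩
        rw [abs_le]
        exact ⟨by linarith [abs_nonneg A], by linarith [le_abs_self A]⟩
      calc ‖z‖ = ‖z‖ := rfl
        _ ≤ |z.re| + |z.im| := Complex.norm_le_abs_re_add_abs_im z
        _ ≤ 1 + |A| + 1 := by linarith
  have hKsub : K ⊆ {z : ℂ | 0 < z.im} := by
    intro z hz
    rw [Complex.mem_reProdIm] at hz
    have := hz.2.1
    simp only [Set.mem_setOf_eq]
    linarith
  obtain ⟨M, hM⟩ := hK.exists_bound_of_continuousOn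
    ((peterssonIntegrand_continuousOn n f g hf hg).mono hKsub)
  set k : ℕ := (n - 2).toNat with hk
  set C : ℝ := max (M * Real.exp A) (Cf * Cg * (k.factorial : ℝ)) with hC
  have hC0 : 0 ≤ C := le_trans (by positivity) (le_max_right _ _)
  have hbound : ∀ z ∈ D, ‖peterssonIntegrand n f g z‖ ≤ C * Real.exp (-z.im) := by
    intro z hz
    have hz0 : 0 < z.im := hz.1
    have hhalf := him z hz
    have hnorm : ‖peterssonIntegrand n f g z‖
        = ‖f (ofComplex z)‖ * ‖g (ofComplex z)‖ * z.im ^ (n - 2) := by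
      rw [peterssonIntegrand_eq n f g hz0, norm_mul, norm_mul, norm_zpow,
        RCLike.norm_conj, Complex.norm_real, Real.norm_eq_abs, abs_of_pos hz0]
    rcases le_or_gt z.im A with hyA | hyA
    · have hzK : z ∈ K := by
        rw [Complex.mem_reProdIm]
        have h2 := abs_lt.mp hz.2.1
        exact ⟨⟨by linarith [h2.1], by linarith [h2.2]⟩, ⟨le_of_lt hhalf, hyA⟩⟩
      have hM0 : 0 ≤ M := le_trans (norm_nonneg _) (hM z hzK)
      calc ‖peterssonIntegrand n f g z‖ ≤ M := hM z hzK
        _ = M * 1 := (mul_one M).symm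
        _ ≤ M * (Real.exp A * Real.exp (-z.im)) := by
            rw [← Real.exp_add]
            apply mul_le_mul_of_nonneg_left _ hM0
            rw [← Real.exp_zero]
            exact Real.exp_le_exp.mpr (by linarith)
        _ = M * Real.exp A * Real.exp (-z.im) := by ring
        _ ≤ C * Real.exp (-z.im) := by
            apply mul_le_mul_of_nonneg_right (le_max_left _ _) (Real.exp_nonneg _)
    · have him' : (ofComplex z).im = z.im := by
        rw [ofComplex_apply_of_im_pos hz0]
        rfl
      have hy1 : (1:ℝ) ≤ z.im := le_trans (le_max_right _ 1) hyA.le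
      have hf1 : ‖f (ofComplex z)‖ ≤ Cf * Real.exp (-2 * Real.pi * z.im) := by
        have := hCf (ofComplex z)
          (by rw [him']; exact le_trans (le_trans (le_max_left _ _) (le_max_left _ _)) hyA.le)
        rwa [him'] at this
      have hg1 : ‖g (ofComplex z)‖ ≤ Cg * Real.exp (-2 * Real.pi * z.im) := by
        have := hCg (ofComplex z)
          (by rw [him']; exact le_trans (le_trans (le_max_right _ _) (le_max_left _ _)) hyA.le)
        rwa [him'] at this
      have hzp : z.im ^ (n - 2) ≤ (k.factorial : ℝ) * Real.exp z.im := by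
        have h1 : z.im ^ (n - 2) ≤ z.im ^ (k : ℤ) :=
          zpow_le_zpow_right₀ hy1 (Int.self_le_toNat _)
        have h2 : z.im ^ k / (k.factorial : ℝ) ≤ Real.exp z.im := by
          refine le_trans ?_ (Real.sum_le_exp_of_nonneg hz0.le (k + 1))
          exact Finset.single_le_sum (f := fun i => z.im ^ i / (i.factorial : ℝ))
            (fun i _ => by positivity) (Finset.self_mem_range_succ k)
        rw [div_le_iff₀ (by positivity)] at h2
        calc z.im ^ (n - 2) ≤ z.im ^ (k : ℤ) := h1
          _ = z.im ^ k := zpow_natCast _ _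
          _ ≤ Real.exp z.im * (k.factorial : ℝ) := h2
          _ = (k.factorial : ℝ) * Real.exp z.im := mul_comm _ _
      have hexp : Real.exp (-2 * Real.pi * z.im) * Real.exp (-2 * Real.pi * z.im)
          * ((k.factorial : ℝ) * Real.exp z.im) ≤ (k.factorial : ℝ) * Real.exp (-z.im) := by
        rw [← Real.exp_add, mul_comm, mul_assoc, ← Real.exp_add]
        apply mul_le_mul_of_nonneg_left _ (by positivity)
        apply Real.exp_le_exp.mpr
        nlinarith [Real.pi_gt_three, hz0.le]
      have hzpnn : (0:ℝ) ≤ z.im ^ (n - 2) := by positivity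
      calc ‖peterssonIntegrand n f g z‖
          = ‖f (ofComplex z)‖ * ‖g (ofComplex z)‖ * z.im ^ (n - 2) := hnorm
        _ ≤ (Cf * Real.exp (-2 * Real.pi * z.im)) * (Cg * Real.exp (-2 * Real.pi * z.im))
            * z.im ^ (n - 2) := by
            gcongr
        _ ≤ (Cf * Real.exp (-2 * Real.pi * z.im)) * (Cg * Real.exp (-2 * Real.pi * z.im))
            * ((k.factorial : ℝ) * Real.exp z.im) := by gcongr
        _ = Cf * Cg * (Real.exp (-2 * Real.pi * z.im) * Real.exp (-2 * Real.pi * z.im)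
            * ((k.factorial : ℝ) * Real.exp z.im)) := by ring
        _ ≤ Cf * Cg * ((k.factorial : ℝ) * Real.exp (-z.im)) := by
            apply mul_le_mul_of_nonneg_left hexp (by positivity)
        _ = Cf * Cg * (k.factorial : ℝ) * Real.exp (-z.im) := by ring
        _ ≤ C * Real.exp (-z.im) := by
            apply mul_le_mul_of_nonneg_right (le_max_right _ _) (Real.exp_nonneg _)
  have hmeas : AEStronglyMeasurable (peterssonIntegrand n f g) (volume.restrict D) :=
    ((peterssonIntegrand_continuousOn n f g hf hg).mono hDsub).aestronglyMeasurable
      hD_open.measurableSet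
  have hFint : IntegrableOn (fun z : ℂ => C * Real.exp (-z.im)) D volume := by
    have h1 : IntegrableOn (fun p : ℝ × ℝ => C * Real.exp (-p.2))
        ((Set.Icc (-(1/2):ℝ) (1/2)) ×ˢ (Set.Ici (0:ℝ))) volume := by
      rw [IntegrableOn, Measure.volume_eq_prod, ← Measure.prod_restrict]
      have hc : Integrable (fun _ : ℝ => C)
          (volume.restrict (Set.Icc (-(1/2):ℝ) (1/2))) :=
        (integrableOn_const_iff).mpr (Or.inr measure_Icc_lt_top)
      have he : Integrable (fun y : ℝ => Real.exp (-y))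
          (volume.restrict (Set.Ici (0:ℝ))) := by
        rw [← IntegrableOn, integrableOn_Ici_iff_integrableOn_Ioi]
        simpa using exp_neg_integrableOn_Ioi 0 one_pos
      exact hc.mul_prod he
    have h2 := (Complex.volume_preserving_equiv_real_prod.integrableOn_comp_preimage
        Complex.measurableEquivRealProd.measurableEmbedding).mpr h1
    have heq : ((fun p : ℝ × ℝ => C * Real.exp (-p.2)) ∘ Complex.measurableEquivRealProd)
        = fun z : ℂ => C * Real.exp (-z.im) := rfl
    rw [heq] at h2
    refine h2.mono_set ?_
    intro z hz
    simp only [Set.mem_preimage, Complex.measurableEquivRealProd_apply, Set.mem_prod,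
      Set.mem_Icc, Set.mem_Ici]
    have h2' := abs_lt.mp hz.2.1
    exact ⟨⟨by linarith [h2'.1], by linarith [h2'.2]⟩, (him z hz).le.trans' (by norm_num)⟩
  refine Integrable.mono hFint hmeas ?_
  rw [ae_restrict_iff' hD_open.measurableSet]
  filter_upwards with z hzD
  rw [Real.norm_eq_abs, _root_.abs_of_nonneg (by positivity : (0:ℝ) ≤ C * Real.exp (-z.im))]
  exact hbound z hzD
end

section
/- For every integer k ≥ 1, the Hecke operator T(k) preserves cusp forms: if f is a cusp form of weight n for SL₂(ℤ), then the function (T(k)f)(z) = k^(n-1) Σ_{a,d ≥ 1, ad = k} Σ_{0 ≤ b < d} d^(-n) f((az+b)/d) is again a cusp form of weight n for SL₂(ℤ) (it is holomorphic on ℍ, satisfies (T(k)f)(γ•z) = (cz+d)^n (T(k)f)(z) for all γ ∈ SL₂(ℤ), and tends to 0 as Im z → ∞). -/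
open UpperHalfPlane Filter Complex
open scoped Manifold MatrixGroups Topology

set_option synthInstance.maxHeartbeats 800000
set_option maxHeartbeats 1600000

noncomputable section

/-- The point `(a z + b) / d` of the upper half-plane, for `a, d ≥ 1` and
`b ≥ 0`. -/
def heckePoint (a d : ℕ) (ha : 0 < a) (hd : 0 < d) (b : ℕ) (z : ℍ) : ℍ :=
  ⟨((a : ℂ) * z + b) / d, by
    have hz : 0 < (z : ℂ).im := z.2
    have hd' : (0 : ℝ) < (d : ℝ) := by exact_mod_cast hd
    have him : (((a : ℂ) * z + b) / d).im = a * (z : ℂ).im * d / ((d : ℝ) ^ 2) := by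
      rw [Complex.div_im]
      simp [Complex.add_im, Complex.mul_im]
      ring
    rw [him]
    positivity⟩

/-- The `k`-th Hecke operator of weight `n`:
`(T(k) f)(z) = k^(n-1) Σ_{a d = k, a, d ≥ 1} Σ_{0 ≤ b < d} d^(-n) f((a z + b)/d)`. -/
def hecke (n : ℤ) (k : ℕ) (f : ℍ → ℂ) : ℍ → ℂ := fun z =>
  (k : ℂ) ^ (n - 1) *
    ∑ p ∈ (Nat.divisorsAntidiagonal k).attach,
      ∑ b ∈ Finset.range p.1.2,
        ((p.1.2 : ℂ)) ^ (-n) *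
          f (heckePoint p.1.1 p.1.2
            (Nat.pos_of_mem_divisors (Nat.fst_mem_divisors_of_mem_antidiagonal p.2))
            (Nat.pos_of_mem_divisors (Nat.snd_mem_divisors_of_mem_antidiagonal p.2))
            b z)

section HeckeAux

open Matrix
open scoped ModularForm

lemma det_map_int' (M : Matrix (Fin 2) (Fin 2) ℤ) :
    (M.map ((↑) : ℤ → ℝ)).det = (M.det : ℝ) := by
  rw [show M.map ((↑) : ℤ → ℝ) = (Int.castRingHom ℝ).mapMatrix M from rfl,
    ← RingHom.map_det]; rfl

/-- An integer matrix with positive determinant, as an element of `GL(2,ℝ)⁺`. -/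
def toGLP (M : Matrix (Fin 2) (Fin 2) ℤ) (h : 0 < M.det) : GL(2, ℝ)⁺ :=
  ⟨Matrix.GeneralLinearGroup.mkOfDetNeZero (M.map ((↑) : ℤ → ℝ))
      (by rw [det_map_int']; exact_mod_cast h.ne'),
    by
      rw [Matrix.mem_glpos]
      simp only [Matrix.GeneralLinearGroup.val_det_apply]
      show (0:ℝ) < (M.map ((↑) : ℤ → ℝ)).det
      rw [det_map_int']
      exact_mod_cast h⟩

lemma toGLP_mul (M N : Matrix (Fin 2) (Fin 2) ℤ) (hM : 0 < M.det) (hN : 0 < N.det) :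
    toGLP (M * N) (by rw [Matrix.det_mul]; positivity) = toGLP M hM * toGLP N hN := by
  apply Subtype.ext
  apply Units.ext
  show (M * N).map _ = _
  show (M * N).map _ = (M.map _) * (N.map _)
  exact Matrix.map_mul (f := Int.castRingHom ℝ)

@[simp] lemma toGLP_coe (M : Matrix (Fin 2) (Fin 2) ℤ) (h : 0 < M.det) :
    ((toGLP M h : GL (Fin 2) ℝ) : Matrix (Fin 2) (Fin 2) ℝ) = M.map ((↑) : ℤ → ℝ) := rfl

lemma toGLP_sl (γ : SL(2, ℤ)) (h : 0 < ((γ : Matrix (Fin 2) (Fin 2) ℤ)).det) :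
    toGLP (γ : Matrix (Fin 2) (Fin 2) ℤ) h = (γ : GL(2, ℝ)⁺) := by
  apply Subtype.ext
  apply Units.ext
  simp [toGLP_coe, ModularGroup.coe]

/-- The standard upper-triangular matrix `!![a, b; 0, d]`. -/
def std (a d b : ℕ) : Matrix (Fin 2) (Fin 2) ℤ := !![(a:ℤ), (b:ℤ); 0, (d:ℤ)]

lemma std_det (a d b : ℕ) : (std a d b).det = ((a * d : ℕ) : ℤ) := by
  rw [std, Matrix.det_fin_two_of]; push_cast; ring

lemma sl_det_pos (γ : SL(2, ℤ)) : 0 < ((γ : Matrix (Fin 2) (Fin 2) ℤ)).det := by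
  rw [γ.2]; norm_num

/-- Uniqueness of the Hermite normal form. -/
lemma nf_unique {a d b a' d' b' : ℤ} (ha : 0 < a) (hb0 : 0 ≤ b) (hb : b < d)
    (ha' : 0 < a') (hb0' : 0 ≤ b') (hb' : b' < d')
    (γ : SL(2, ℤ))
    (h : (γ : Matrix (Fin 2) (Fin 2) ℤ) * !![a, b; 0, d] = !![a', b'; 0, d']) :
    a = a' ∧ d = d' ∧ b = b' := by
  have hd : 0 < d := lt_of_le_of_lt hb0 hb
  have hγ : (γ : Matrix (Fin 2) (Fin 2) ℤ) =
      !![γ.1 0 0, γ.1 0 1; γ.1 1 0, γ.1 1 1] := (Matrix.etaExpand_eq _).symm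
  obtain ⟨e, ff, g, hh, he : γ.1 0 0 = e, hf : γ.1 0 1 = ff, hg : γ.1 1 0 = g,
      hhh : γ.1 1 1 = hh⟩ :
      ∃ e ff g hh, γ.1 0 0 = e ∧ γ.1 0 1 = ff ∧ γ.1 1 0 = g ∧ γ.1 1 1 = hh :=
    ⟨_, _, _, _, rfl, rfl, rfl, rfl⟩
  rw [he, hf, hg, hhh] at hγ
  have hdet : e * hh - ff * g = 1 := by
    have h2 := γ.2
    rw [Matrix.det_fin_two, he, hf, hg, hhh] at h2
    exact h2
  rw [hγ, Matrix.mul_fin_two] at h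
  have h10 : g * a + hh * 0 = 0 := by have := congrFun (congrFun h 1) 0; simpa using this
  have hg0 : g = 0 := by
    rcases mul_eq_zero.mp (by omega : g * a = 0) with h' | h'
    · exact h'
    · omega
  have h00 : e * a + ff * 0 = a' := by have := congrFun (congrFun h 0) 0; simpa using this
  have h01 : e * b + ff * d = b' := by have := congrFun (congrFun h 0) 1; simpa using this
  have h11 : g * b + hh * d = d' := by have := congrFun (congrFun h 1) 1; simpa using this
  subst hg0
  have hehh : e * hh = 1 := by omega
  rcases Int.mul_eq_one_iff_eq_one_or_neg_one.mp hehh with ⟨he1, hh1⟩ | ⟨he1, hh1⟩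
  · subst he1; subst hh1
    refine ⟨by omega, by omega, ?_⟩
    have hdd : d' = d := by omega
    have hff : ff = 0 := by nlinarith
    subst hff
    simp only [mul_zero, zero_mul, add_zero, zero_add, one_mul] at h01
    omega
  · exfalso; subst he1; nlinarith

/-- Existence of the Hermite normal form. -/
lemma nf_exists (k : ℕ) (hk : 0 < k) (A : Matrix (Fin 2) (Fin 2) ℤ) (hA : A.det = k) :
    ∃ t : (ℕ × ℕ) × ℕ, t.1.1 * t.1.2 = k ∧ t.2 < t.1.2 ∧
      ∃ γ : SL(2, ℤ), A = (γ : Matrix (Fin 2) (Fin 2) ℤ) * std t.1.1 t.1.2 t.2 := by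
  obtain ⟨p, q, r, s, hAeq⟩ : ∃ p q r s, A = !![p, q; r, s] :=
    ⟨_, _, _, _, Matrix.etaExpand_eq A |>.symm⟩
  subst hAeq
  rw [Matrix.det_fin_two_of] at hA
  set g : ℕ := Int.gcd p r with hgdef
  have hgpos : 0 < g := by
    rcases Nat.eq_zero_or_pos g with h | h
    · exfalso
      obtain ⟨hp, hr⟩ := Int.gcd_eq_zero_iff.mp h
      subst hp; subst hr
      simp at hA
      omega
    · exact h
  have hgz : (0:ℤ) < (g:ℤ) := by exact_mod_cast hgpos
  have hgp : (g:ℤ) ∣ p := Int.gcd_dvd_left p r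
  have hgr : (g:ℤ) ∣ r := Int.gcd_dvd_right p r
  set u := Int.gcdA p r
  set v := Int.gcdB p r
  have hbezout : (g:ℤ) = p * u + r * v := Int.gcd_eq_gcd_ab p r
  have hdet1 : (!![u, v; -(r / g), p / g] : Matrix (Fin 2) (Fin 2) ℤ).det = 1 := by
    rw [Matrix.det_fin_two_of]
    have : (g:ℤ) * (u * (p / g) - v * (-(r / g))) = (g:ℤ) * 1 := by
      have h1 : (g:ℤ) * (p / g) = p := Int.mul_ediv_cancel' hgp
      have h2 : (g:ℤ) * (r / g) = r := Int.mul_ediv_cancel' hgr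
      calc (g:ℤ) * (u * (p / g) - v * (-(r / g)))
          = u * ((g:ℤ) * (p/g)) + v * ((g:ℤ) * (r/g)) := by ring
        _ = u * p + v * r := by rw [h1, h2]
        _ = (g:ℤ) * 1 := by rw [mul_one, hbezout]; ring
    exact mul_left_cancel₀ hgz.ne' this
  set γ₁ : SL(2, ℤ) := ⟨!![u, v; -(r / g), p / g], hdet1⟩
  have h1 : (g:ℤ) * (p / g) = p := Int.mul_ediv_cancel' hgp
  have h2 : (g:ℤ) * (r / g) = r := Int.mul_ediv_cancel' hgr
  set s₂ : ℤ := -(r / g) * q + p / g * s with hs2def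
  have hB : (γ₁ : Matrix (Fin 2) (Fin 2) ℤ) * !![p, q; r, s] =
      !![(g:ℤ), u * q + v * s; 0, s₂] := by
    show !![u, v; -(r / g), p / g] * _ = _
    rw [Matrix.mul_fin_two]
    have e00 : u * p + v * r = (g:ℤ) := by rw [hbezout]; ring
    have e10 : -(r / g) * p + p / g * r = 0 := by
      apply mul_left_cancel₀ hgz.ne'
      calc (g:ℤ) * (-(r / g) * p + p / g * r)
          = -(((g:ℤ) * (r/g)) * p) + ((g:ℤ) * (p/g)) * r := by ring
        _ = (g:ℤ) * 0 := by rw [h1, h2]; ring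
    rw [e00, e10]
  have hdetB : (g:ℤ) * s₂ = (k:ℤ) := by
    have : ((γ₁ : Matrix (Fin 2) (Fin 2) ℤ) * !![p, q; r, s]).det = (k:ℤ) := by
      rw [Matrix.det_mul, γ₁.2, one_mul, Matrix.det_fin_two_of]; exact hA
    rw [hB, Matrix.det_fin_two_of] at this
    linarith [this]
  have hs2pos : 0 < s₂ := by
    rcases lt_trichotomy s₂ 0 with h | h | h
    · nlinarith [hgz]
    · rw [h, mul_zero] at hdetB; exact_mod_cast absurd hdetB.symm (by exact_mod_cast hk.ne')
    · exact h
  set q₂ : ℤ := u * q + v * s with hq2def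
  set b : ℤ := q₂ % s₂ with hbdef
  have hb0 : 0 ≤ b := Int.emod_nonneg _ hs2pos.ne'
  have hbs : b < s₂ := Int.emod_lt_of_pos _ hs2pos
  have hdet2 : (!![1, -(q₂ / s₂); 0, 1] : Matrix (Fin 2) (Fin 2) ℤ).det = 1 := by
    rw [Matrix.det_fin_two_of]; ring
  set γ₂ : SL(2, ℤ) := ⟨!![1, -(q₂ / s₂); 0, 1], hdet2⟩
  have hC : (γ₂ : Matrix (Fin 2) (Fin 2) ℤ) * !![(g:ℤ), q₂; 0, s₂] = !![(g:ℤ), b; 0, s₂] := by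
    show !![1, -(q₂ / s₂); 0, 1] * _ = _
    rw [Matrix.mul_fin_two]
    have e01 : 1 * q₂ + -(q₂ / s₂) * s₂ = b := by rw [hbdef, Int.emod_def]; ring
    rw [e01]
    norm_num
  set σ : SL(2, ℤ) := γ₂ * γ₁ with hσdef
  have hσ : (σ : Matrix (Fin 2) (Fin 2) ℤ) * !![p, q; r, s] = !![(g:ℤ), b; 0, s₂] := by
    rw [hσdef, Matrix.SpecialLinearGroup.coe_mul, mul_assoc, hB, hC]
  have hfin : !![p, q; r, s] = ((σ⁻¹ : SL(2, ℤ)) : Matrix (Fin 2) (Fin 2) ℤ) *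
      !![(g:ℤ), b; 0, s₂] := by
    rw [← hσ, ← mul_assoc]
    have : ((σ⁻¹ : SL(2, ℤ)) : Matrix (Fin 2) (Fin 2) ℤ) * (σ : Matrix (Fin 2) (Fin 2) ℤ)
        = 1 := by
      rw [← Matrix.SpecialLinearGroup.coe_mul, inv_mul_cancel,
        Matrix.SpecialLinearGroup.coe_one]
    rw [this, one_mul]
  refine ⟨((g, s₂.toNat), b.toNat), ?_, ?_, σ⁻¹, ?_⟩
  · have : ((g * s₂.toNat : ℕ) : ℤ) = (k:ℤ) := by
      push_cast
      rw [Int.toNat_of_nonneg hs2pos.le]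
      exact hdetB
    exact_mod_cast this
  · simp only
    omega
  · simp only [std]
    rw [Int.toNat_of_nonneg hb0, Int.toNat_of_nonneg hs2pos.le]
    exact hfin

/-- The Hermite normal form of an integer matrix of determinant `k`. -/
def nf (k : ℕ) (hk : 0 < k) (A : Matrix (Fin 2) (Fin 2) ℤ) (hA : A.det = k) :
    (ℕ × ℕ) × ℕ := (nf_exists k hk A hA).choose

lemma nf_spec (k : ℕ) (hk : 0 < k) (A : Matrix (Fin 2) (Fin 2) ℤ) (hA : A.det = k) :
    (nf k hk A hA).1.1 * (nf k hk A hA).1.2 = k ∧ (nf k hk A hA).2 < (nf k hk A hA).1.2 ∧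
      ∃ γ : SL(2, ℤ), A = (γ : Matrix (Fin 2) (Fin 2) ℤ) *
        std (nf k hk A hA).1.1 (nf k hk A hA).1.2 (nf k hk A hA).2 :=
  (nf_exists k hk A hA).choose_spec

/-- If `A = δ * std t` with valid `t`, then `nf A = t`. -/
lemma nf_eq_of (k : ℕ) (hk : 0 < k) (A : Matrix (Fin 2) (Fin 2) ℤ) (hA : A.det = k)
    (t : (ℕ × ℕ) × ℕ) (ht1 : 0 < t.1.1) (ht2 : t.2 < t.1.2) (δ : SL(2, ℤ))
    (h : A = (δ : Matrix (Fin 2) (Fin 2) ℤ) * std t.1.1 t.1.2 t.2) :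
    nf k hk A hA = t := by
  obtain ⟨h1, h2, δ', hδ'⟩ := nf_spec k hk A hA
  set t' := nf k hk A hA
  have ht1' : 0 < t'.1.1 := by
    rcases Nat.eq_zero_or_pos t'.1.1 with h0 | h0
    · exfalso; rw [h0, zero_mul] at h1; omega
    · exact h0
  have key : ((δ'⁻¹ * δ : SL(2, ℤ)) : Matrix (Fin 2) (Fin 2) ℤ) * std t.1.1 t.1.2 t.2
      = std t'.1.1 t'.1.2 t'.2 := by
    rw [Matrix.SpecialLinearGroup.coe_mul, mul_assoc, ← h]
    rw [hδ'] at h ⊢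
    rw [← mul_assoc, ← Matrix.SpecialLinearGroup.coe_mul, inv_mul_cancel,
      Matrix.SpecialLinearGroup.coe_one, one_mul]
  have := nf_unique (a := (t.1.1 : ℤ)) (b := (t.2 : ℤ)) (d := (t.1.2 : ℤ))
    (a' := (t'.1.1 : ℤ)) (b' := (t'.2 : ℤ)) (d' := (t'.1.2 : ℤ))
    (by exact_mod_cast ht1) (by positivity) (by exact_mod_cast ht2)
    (by exact_mod_cast ht1') (by positivity) (by exact_mod_cast h2)
    (δ'⁻¹ * δ) key
  obtain ⟨e1, e2, e3⟩ := this
  have q1 : t.1.1 = t'.1.1 := by exact_mod_cast e1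
  have q2 : t.1.2 = t'.1.2 := by exact_mod_cast e2
  have q3 : t.2 = t'.2 := by exact_mod_cast e3
  ext <;> omega

variable {k : ℕ}

/-- Index type for the Hecke sum. -/
abbrev Idx (k : ℕ) := Σ _p : {q : ℕ × ℕ // q ∈ Nat.divisorsAntidiagonal k}, ℕ

def mA (x : Idx k) : Matrix (Fin 2) (Fin 2) ℤ := std x.1.1.1 x.1.1.2 x.2

lemma apos (x : Idx k) : 0 < x.1.1.1 :=
  Nat.pos_of_mem_divisors (Nat.fst_mem_divisors_of_mem_antidiagonal x.1.2)

lemma dpos (x : Idx k) : 0 < x.1.1.2 :=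
  Nat.pos_of_mem_divisors (Nat.snd_mem_divisors_of_mem_antidiagonal x.1.2)

lemma mA_det (x : Idx k) : (mA x).det = (k : ℤ) := by
  rw [mA, std_det]
  have := (Nat.mem_divisorsAntidiagonal.mp x.1.2).1
  exact_mod_cast this

lemma mA_det_pos (hk : 0 < k) (x : Idx k) : 0 < (mA x).det := by
  rw [mA_det]; exact_mod_cast hk

/-- The Hecke sum index as an element of `GL(2,ℝ)⁺`. -/
def gA (hk : 0 < k) (x : Idx k) : GL(2, ℝ)⁺ := toGLP (mA x) (mA_det_pos hk x)

lemma gA_smul (hk : 0 < k) (x : Idx k) (z : ℍ) :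
    gA hk x • z = heckePoint x.1.1.1 x.1.1.2 (apos x) (dpos x) x.2 z := by
  apply UpperHalfPlane.ext
  erw [UpperHalfPlane.coe_smul_of_det_pos (gA hk x).2]
  show num _ _ / denom _ _ = ((x.1.1.1 : ℂ) * z + x.2) / x.1.1.2
  simp [num, denom, gA, toGLP, mA, std, Matrix.GeneralLinearGroup.mkOfDetNeZero,
    Matrix.GeneralLinearGroup.mk', Matrix.unitOfDetInvertible, Matrix.map_apply, unitOfInvertible]

lemma gA_denom (hk : 0 < k) (x : Idx k) (z : ℍ) :
    denom (gA hk x) z = (x.1.1.2 : ℂ) := by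
  simp [denom, gA, toGLP, mA, std, Matrix.GeneralLinearGroup.mkOfDetNeZero,
    Matrix.GeneralLinearGroup.mk', Matrix.unitOfDetInvertible, Matrix.map_apply, unitOfInvertible]

lemma gA_det (hk : 0 < k) (x : Idx k) :
    ((((gA hk x : GL (Fin 2) ℝ) : Matrix (Fin 2) (Fin 2) ℝ)).det : ℂ) = (k : ℂ) := by
  show (((((mA x).map ((↑) : ℤ → ℝ))).det : ℝ) : ℂ) = _
  rw [det_map_int', mA_det]
  push_cast
  ring

instance slashGLPos : SlashAction ℤ GL(2, ℝ)⁺ (ℍ → ℂ) :=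
  monoidHomSlashAction (GLPos (Fin 2) ℝ).subtype

lemma slashP_def (k : ℤ) (f : ℍ → ℂ) (g : GL(2, ℝ)⁺) :
    f ∣[k] g = fun τ => f (g • τ) *
      ((((g : GL (Fin 2) ℝ) : Matrix (Fin 2) (Fin 2) ℝ).det : ℝ) : ℂ) ^ (k - 1) *
        denom g τ ^ (-k) := by
  funext τ
  have hg : 0 < ((g : GL (Fin 2) ℝ).det.val) := g.2
  show σ (g : GL (Fin 2) ℝ) (f ((g : GL (Fin 2) ℝ) • τ)) *
    ((|(g : GL (Fin 2) ℝ).det.val| : ℝ) : ℂ) ^ (k - 1) * denom (g : GL (Fin 2) ℝ) τ ^ (-k) = _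
  rw [σ, if_pos hg, abs_of_pos hg]
  rfl

lemma denomP_apply (γ : SL(2, ℤ)) (z : ℍ) :
    denom (γ : GL(2, ℝ)⁺) z = ((γ : Matrix (Fin 2) (Fin 2) ℤ) 1 0 : ℂ) * z
      + ((γ : Matrix (Fin 2) (Fin 2) ℤ) 1 1 : ℂ) := by
  show (((γ : Matrix (Fin 2) (Fin 2) ℤ) 1 0 : ℝ) : ℂ) * z
    + (((γ : Matrix (Fin 2) (Fin 2) ℤ) 1 1 : ℝ) : ℂ) = _
  simp only [Complex.ofReal_intCast]

/-- The basic formula for the slash of `f` by a Hecke index. -/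
lemma slash_gA_apply (n : ℤ) (f : ℍ → ℂ) (hk : 0 < k) (x : Idx k) (z : ℍ) :
    (f ∣[n] gA hk x) z =
      (k : ℂ) ^ (n - 1) * ((x.1.1.2 : ℂ) ^ (-n) *
        f (heckePoint x.1.1.1 x.1.1.2 (apos x) (dpos x) x.2 z)) := by
  rw [slashP_def]
  show f (gA hk x • z) * _ ^ (n - 1) * denom (gA hk x) z ^ (-n) = _
  rw [gA_smul, gA_denom, gA_det]
  ring

/-- The Hecke sum index finset. -/
def IdxS (k : ℕ) : Finset (Idx k) :=
  ((Nat.divisorsAntidiagonal k).attach).sigma (fun p => Finset.range p.1.2)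

lemma mem_IdxS (x : Idx k) : x ∈ IdxS k ↔ x.2 < x.1.1.2 := by
  rw [IdxS, Finset.mem_sigma, Finset.mem_range]
  exact ⟨fun h => h.2, fun h => ⟨Finset.mem_attach _ _, h⟩⟩

/-- `hecke` as a sum of slashes. -/
lemma hecke_eq_sum_slash (n : ℤ) (f : ℍ → ℂ) (hk : 0 < k) (z : ℍ) :
    hecke n k f z = ∑ x ∈ IdxS k, (f ∣[n] gA hk x) z := by
  rw [IdxS, Finset.sum_sigma]
  rw [hecke, Finset.mul_sum]
  refine Finset.sum_congr rfl fun p _ => ?_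
  rw [Finset.mul_sum]
  refine Finset.sum_congr rfl fun b _ => ?_
  rw [slash_gA_apply]

/-- Weak modularity gives slash invariance. -/
lemma wm_slash {n : ℤ} {f : ℍ → ℂ} (hwm : IsWeaklyModular n f) (δ : SL(2, ℤ)) :
    f ∣[n] (δ : GL(2, ℝ)⁺) = f := by
  funext z
  rw [slashP_def]
  show f ((δ : GL(2, ℝ)⁺) • z) * _ ^ (n - 1) * denom (δ : GL(2, ℝ)⁺) z ^ (-n) = _
  have h1 : ((((δ : GL(2, ℝ)⁺) : GL (Fin 2) ℝ) : Matrix (Fin 2) (Fin 2) ℝ)).det = 1 :=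
    ModularGroup.det_coe
  have h2 : denom (δ : GL(2, ℝ)⁺) z =
      ((δ : Matrix (Fin 2) (Fin 2) ℤ) 1 0 : ℂ) * z
        + ((δ : Matrix (Fin 2) (Fin 2) ℤ) 1 1 : ℂ) := by
    rw [denomP_apply]
  have h3 : f ((δ : GL(2, ℝ)⁺) • z) =
      (((δ : Matrix (Fin 2) (Fin 2) ℤ) 1 0 : ℂ) * z
        + ((δ : Matrix (Fin 2) (Fin 2) ℤ) 1 1 : ℂ)) ^ n * f z := hwm δ z
  rw [h1, h2, h3]
  have hne : (((δ : Matrix (Fin 2) (Fin 2) ℤ) 1 0 : ℂ) * z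
      + ((δ : Matrix (Fin 2) (Fin 2) ℤ) 1 1 : ℂ)) ≠ 0 := by
    rw [← h2]; exact denom_ne_zero _ z
  rw [_root_.zpow_neg, Complex.ofReal_one, _root_.one_zpow, mul_one, mul_comm, ← mul_assoc,
    inv_mul_cancel₀ (zpow_ne_zero _ hne), one_mul]


lemma mA_mul_sl_det (hk : 0 < k) (x : Idx k) (γ : SL(2, ℤ)) :
    (mA x * (γ : Matrix (Fin 2) (Fin 2) ℤ)).det = (k : ℤ) := by
  rw [Matrix.det_mul, γ.2, mul_one, mA_det]

/-- The permutation of Hecke indices induced by right multiplication by `γ`. -/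
def Phi (hk : 0 < k) (γ : SL(2, ℤ)) (x : Idx k) : Idx k :=
  ⟨⟨(nf k hk (mA x * (γ : Matrix (Fin 2) (Fin 2) ℤ)) (mA_mul_sl_det hk x γ)).1, by
      rw [Nat.mem_divisorsAntidiagonal]
      exact ⟨(nf_spec k hk _ _).1, hk.ne'⟩⟩,
    (nf k hk (mA x * (γ : Matrix (Fin 2) (Fin 2) ℤ)) (mA_mul_sl_det hk x γ)).2⟩

lemma Phi_snd_lt (hk : 0 < k) (γ : SL(2, ℤ)) (x : Idx k) :
    (Phi hk γ x).2 < (Phi hk γ x).1.1.2 :=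
  (nf_spec k hk (mA x * (γ : Matrix (Fin 2) (Fin 2) ℤ)) (mA_mul_sl_det hk x γ)).2.1

lemma Phi_mA (hk : 0 < k) (γ : SL(2, ℤ)) (x : Idx k) :
    ∃ δ : SL(2, ℤ), mA x * (γ : Matrix (Fin 2) (Fin 2) ℤ)
      = (δ : Matrix (Fin 2) (Fin 2) ℤ) * mA (Phi hk γ x) :=
  (nf_spec k hk (mA x * (γ : Matrix (Fin 2) (Fin 2) ℤ)) (mA_mul_sl_det hk x γ)).2.2

lemma Phi_Phi (hk : 0 < k) (γ : SL(2, ℤ)) (x : Idx k) (hx : x.2 < x.1.1.2) :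
    Phi hk γ⁻¹ (Phi hk γ x) = x := by
  obtain ⟨δ, hδ⟩ := Phi_mA hk γ x
  have key : mA (Phi hk γ x) * ((γ⁻¹ : SL(2, ℤ)) : Matrix (Fin 2) (Fin 2) ℤ)
      = ((δ⁻¹ : SL(2, ℤ)) : Matrix (Fin 2) (Fin 2) ℤ) * mA x := by
    have h1 : mA (Phi hk γ x) = ((δ⁻¹ : SL(2, ℤ)) : Matrix (Fin 2) (Fin 2) ℤ)
        * (mA x * (γ : Matrix (Fin 2) (Fin 2) ℤ)) := by
      rw [hδ, ← mul_assoc, ← Matrix.SpecialLinearGroup.coe_mul, inv_mul_cancel,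
        Matrix.SpecialLinearGroup.coe_one, one_mul]
    rw [h1, mul_assoc, mul_assoc, ← Matrix.SpecialLinearGroup.coe_mul, mul_inv_cancel,
      Matrix.SpecialLinearGroup.coe_one, mul_one]
  have hnf : nf k hk (mA (Phi hk γ x) * ((γ⁻¹ : SL(2, ℤ)) : Matrix (Fin 2) (Fin 2) ℤ))
      (mA_mul_sl_det hk _ _) = ((x.1.1.1, x.1.1.2), x.2) :=
    nf_eq_of _ _ _ _ _ (apos x) hx δ⁻¹ (by rw [key]; rfl)
  show (⟨⟨(nf k hk _ _).1, _⟩, (nf k hk _ _).2⟩ : Idx k) = x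
  obtain ⟨⟨p, hp⟩, b⟩ := x
  refine Sigma.ext (Subtype.ext ?_) (heq_of_eq ?_)
  · show (nf k hk _ _).1 = p
    rw [hnf]
  · show (nf k hk _ _).2 = b
    rw [hnf]

/-- `Phi` preserves the summand. -/
lemma slash_Phi (n : ℤ) {f : ℍ → ℂ} (hwm : IsWeaklyModular n f) (hk : 0 < k)
    (γ : SL(2, ℤ)) (x : Idx k) :
    (f ∣[n] gA hk x) ∣[n] (γ : GL(2, ℝ)⁺) = f ∣[n] gA hk (Phi hk γ x) := by
  rw [← SlashAction.slash_mul]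
  have h1 : gA hk x * (γ : GL(2, ℝ)⁺)
      = toGLP (mA x * (γ : Matrix (Fin 2) (Fin 2) ℤ))
          (by rw [mA_mul_sl_det hk x γ]; exact_mod_cast hk) := by
    rw [toGLP_mul _ _ (mA_det_pos hk x) (sl_det_pos γ), toGLP_sl]
    rfl
  obtain ⟨δ, hδ⟩ := Phi_mA hk γ x
  have h2 : toGLP (mA x * (γ : Matrix (Fin 2) (Fin 2) ℤ))
        (by rw [mA_mul_sl_det hk x γ]; exact_mod_cast hk)
      = (δ : GL(2, ℝ)⁺) * gA hk (Phi hk γ x) := by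
    have : 0 < ((δ : Matrix (Fin 2) (Fin 2) ℤ) * mA (Phi hk γ x)).det := by
      rw [← hδ, mA_mul_sl_det hk x γ]; exact_mod_cast hk
    calc toGLP _ _ = toGLP ((δ : Matrix (Fin 2) (Fin 2) ℤ) * mA (Phi hk γ x)) this := by
            congr 1
        _ = toGLP (δ : Matrix (Fin 2) (Fin 2) ℤ) (sl_det_pos δ)
              * toGLP (mA (Phi hk γ x)) (mA_det_pos hk _) := toGLP_mul _ _ _ _
        _ = (δ : GL(2, ℝ)⁺) * gA hk (Phi hk γ x) := by rw [toGLP_sl]; rfl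
  rw [h1, h2, SlashAction.slash_mul, wm_slash hwm δ]



lemma aux_im (a d b : ℕ) (ha : 0 < a) (hd : 0 < d) (w : ℂ) :
    (((a : ℂ) * w + b) / d).im = a * w.im / d := by
  have hd' : (d : ℝ) ≠ 0 := by positivity
  rw [Complex.div_im]
  simp [Complex.add_im, Complex.mul_im]
  field_simp

lemma heckePoint_im (a d : ℕ) (ha : 0 < a) (hd : 0 < d) (b : ℕ) (z : ℍ) :
    (heckePoint a d ha hd b z).im = a * z.im / d := by
  show ((((a : ℂ) * z + b) / d).im) = _
  rw [aux_im a d b ha hd]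
  rfl

lemma heckePoint_tendsto (a d : ℕ) (ha : 0 < a) (hd : 0 < d) (b : ℕ) :
    Tendsto (heckePoint a d ha hd b) atImInfty atImInfty := by
  rw [UpperHalfPlane.atImInfty]
  rw [Filter.tendsto_comap_iff]
  have h1 : Tendsto (fun z : ℍ => z.im) atImInfty atTop := tendsto_comap
  have h2 : Tendsto (fun z : ℍ => (a : ℝ) * z.im / d) atImInfty atTop :=
    (h1.const_mul_atTop (by positivity : (0:ℝ) < (a:ℝ))).atTop_div_const
      (by positivity : (0:ℝ) < (d:ℝ))
  refine h2.congr fun z => ?_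
  show (a : ℝ) * z.im / d = (heckePoint a d ha hd b z).im
  rw [heckePoint_im]

/-- Evaluating at `γ • z` in terms of the slash. -/
lemma eval_smul_eq (n : ℤ) (F : ℍ → ℂ) (γ : SL(2, ℤ)) (z : ℍ) :
    F ((γ : GL(2, ℝ)⁺) • z) =
      denom (γ : GL(2, ℝ)⁺) z ^ n * (F ∣[n] (γ : GL(2, ℝ)⁺)) z := by
  rw [slashP_def]
  show _ = _ * (F ((γ : GL(2, ℝ)⁺) • z) * (_ : ℂ) ^ (n - 1) * denom _ z ^ (-n))
  rw [show ((((γ : GL(2, ℝ)⁺) : GL (Fin 2) ℝ) : Matrix (Fin 2) (Fin 2) ℝ)).det = 1 from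
    ModularGroup.det_coe, Complex.ofReal_one, _root_.one_zpow, mul_one, _root_.zpow_neg]
  rw [mul_comm, mul_assoc, inv_mul_cancel₀ (zpow_ne_zero _ (denom_ne_zero _ z)), mul_one]

lemma sum_Phi (n : ℤ) {f : ℍ → ℂ} (hk : 0 < k) (γ : SL(2, ℤ)) (z : ℍ) :
    ∑ x ∈ IdxS k, (f ∣[n] gA hk (Phi hk γ x)) z = ∑ x ∈ IdxS k, (f ∣[n] gA hk x) z := by
  refine Finset.sum_bij' (fun x _ => Phi hk γ x) (fun x _ => Phi hk γ⁻¹ x)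
    (fun x hx => ?_) (fun x hx => ?_) (fun x hx => ?_) (fun x hx => ?_) (fun x hx => rfl)
  · exact (mem_IdxS _).mpr (Phi_snd_lt hk γ x)
  · exact (mem_IdxS _).mpr (Phi_snd_lt hk γ⁻¹ x)
  · exact Phi_Phi hk γ x ((mem_IdxS x).mp hx)
  · have := Phi_Phi hk γ⁻¹ x ((mem_IdxS x).mp hx)
    rwa [inv_inv] at this

end HeckeAux

open scoped ModularForm

/-- The Hecke operators preserve cusp forms: if `f` is a cusp form of weight
`n` for `SL(2, ℤ)` and `k ≥ 1`, then `T(k) f` is again a cusp form of weight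
`n`. -/
theorem hecke_preserves_cuspForms (n : ℤ) (k : ℕ) (hk : 1 ≤ k)
    (f : ℍ → ℂ) (hf : IsCuspForm n f) : IsCuspForm n (hecke n k f) := by
  obtain ⟨hholo, hwm, hzero⟩ := hf
  have hk0 : 0 < k := hk
  refine ⟨?_, ?_, ?_⟩
  · -- holomorphy
    rw [UpperHalfPlane.mdifferentiable_iff]
    have hfd : DifferentiableOn ℂ (f ∘ ofComplex) {z : ℂ | 0 < z.im} :=
      UpperHalfPlane.mdifferentiable_iff.mp hholo
    have key : ∀ (a d : ℕ) (ha : 0 < a) (hd : 0 < d) (b : ℕ),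
        DifferentiableOn ℂ (fun w : ℂ => f (heckePoint a d ha hd b (ofComplex w)))
          {z : ℂ | 0 < z.im} := by
      intro a d ha hd b
      have hmap : Set.MapsTo (fun w : ℂ => ((a:ℂ) * w + b) / d)
          {z : ℂ | 0 < z.im} {z : ℂ | 0 < z.im} := by
        intro w hw
        simp only [Set.mem_setOf_eq] at *
        rw [aux_im a d b ha hd]
        positivity
      have haff : DifferentiableOn ℂ (fun w : ℂ => ((a:ℂ) * w + b) / d)
          {z : ℂ | 0 < z.im} :=
        (((differentiable_id.const_mul _).add_const _).div_const _).differentiableOn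
      have hcomp := hfd.comp haff hmap
      refine hcomp.congr fun w hw => ?_
      simp only [Set.mem_setOf_eq] at hw
      have him : 0 < (((a:ℂ) * w + b) / d).im := by rw [aux_im a d b ha hd]; positivity
      have hpt : heckePoint a d ha hd b (ofComplex w) = ofComplex (((a:ℂ) * w + b) / d) := by
        apply UpperHalfPlane.ext
        rw [UpperHalfPlane.ofComplex_apply_of_im_pos him]
        show ((a:ℂ) * ((ofComplex w : ℍ) : ℂ) + b) / d = _
        rw [UpperHalfPlane.ofComplex_apply_of_im_pos hw]
      rw [hpt]
      rfl
    show DifferentiableOn ℂ (fun w : ℂ => hecke n k f (ofComplex w)) {z : ℂ | 0 < z.im}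
    simp only [hecke]
    apply DifferentiableOn.const_mul
    apply DifferentiableOn.fun_sum
    intro p _
    apply DifferentiableOn.fun_sum
    intro b _
    apply DifferentiableOn.const_mul
    exact key _ _ _ _ _
  · -- weak modularity
    intro γ z
    have e1 : hecke n k f (γ • z) =
        ∑ x ∈ IdxS k, (f ∣[n] gA hk0 x) ((γ : GL(2, ℝ)⁺) • z) :=
      hecke_eq_sum_slash n f hk0 _
    have e2 : ∀ x : Idx k, (f ∣[n] gA hk0 x) ((γ : GL(2, ℝ)⁺) • z)
        = denom (γ : GL(2, ℝ)⁺) z ^ n * (f ∣[n] gA hk0 (Phi hk0 γ x)) z := by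
      intro x
      rw [eval_smul_eq n (f ∣[n] gA hk0 x) γ z, slash_Phi n hwm hk0 γ x]
    rw [e1]
    simp_rw [e2]
    rw [← Finset.mul_sum, sum_Phi n hk0 γ z, ← hecke_eq_sum_slash n f hk0 z,
      denomP_apply]
  · -- zero at infinity
    show Tendsto (hecke n k f) atImInfty (𝓝 0)
    have hsum : Tendsto (fun z : ℍ =>
        ∑ p ∈ (Nat.divisorsAntidiagonal k).attach, ∑ b ∈ Finset.range p.1.2,
          ((p.1.2 : ℂ)) ^ (-n) *
            f (heckePoint p.1.1 p.1.2
              (Nat.pos_of_mem_divisors (Nat.fst_mem_divisors_of_mem_antidiagonal p.2))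
              (Nat.pos_of_mem_divisors (Nat.snd_mem_divisors_of_mem_antidiagonal p.2))
              b z)) atImInfty (𝓝 0) := by
      have h0 : Tendsto (fun z : ℍ =>
          ∑ p ∈ (Nat.divisorsAntidiagonal k).attach, ∑ b ∈ Finset.range p.1.2,
            ((p.1.2 : ℂ)) ^ (-n) *
              f (heckePoint p.1.1 p.1.2
                (Nat.pos_of_mem_divisors (Nat.fst_mem_divisors_of_mem_antidiagonal p.2))
                (Nat.pos_of_mem_divisors (Nat.snd_mem_divisors_of_mem_antidiagonal p.2))
                b z)) atImInfty
          (𝓝 (∑ p ∈ (Nat.divisorsAntidiagonal k).attach,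
            ∑ _b ∈ Finset.range p.1.2, (0 : ℂ))) := by
        refine tendsto_finset_sum _ fun p _ => ?_
        refine tendsto_finset_sum _ fun b _ => ?_
        have hcomp : Tendsto (fun z : ℍ =>
            f (heckePoint p.1.1 p.1.2
              (Nat.pos_of_mem_divisors (Nat.fst_mem_divisors_of_mem_antidiagonal p.2))
              (Nat.pos_of_mem_divisors (Nat.snd_mem_divisors_of_mem_antidiagonal p.2))
              b z)) atImInfty (𝓝 0) :=
          hzero.comp (heckePoint_tendsto _ _ _ _ _)
        simpa using hcomp.const_mul (((p.1.2 : ℂ)) ^ (-n))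
      simpa using h0
    have := hsum.const_mul ((k : ℂ) ^ (n - 1))
    rw [mul_zero] at this
    exact this

end
end
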